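/- Let a₁, a₂ ∈ G⁺ and b₁, b₂ ∈ H⁺. Then: (i) (a₁,b₁) ≤_L (a₂,b₂) if and only if a₁ ≤_L a₂ in the monoid G⁺ and b₁^{a₁⁻¹} ≤_L b₂^{a₂⁻¹} in the monoid H⁺; (ii) (a₁,b₁) ≤_R (a₂,b₂) if and only if a₁ ≤_R a₂ in G⁺ and b₁ ≤_R b₂ in H⁺. -/

import Mathlib

/-- `a` left-divides `b` in the monoid `M`. -/
def dvdL {M : Type*} [Monoid M] (a b : M) : Prop := ∃ c, a * c = b

/-- `a` right-divides `b` in the monoid `M`. -/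
def dvdR {M : Type*} [Monoid M] (a b : M) : Prop := ∃ c, c * a = b

/-- `L(a)`, the set of left divisors of `a`. -/
def Lset {M : Type*} [Monoid M] (a : M) : Set M := {x | dvdL x a}

/-- `R(a)`, the set of right divisors of `a`. -/
def Rset {M : Type*} [Monoid M] (a : M) : Set M := {x | dvdR x a}

/-- `a` is an atom: `a ≠ 1` and `a = b * c` implies `b = 1` or `c = 1`. -/
def IsAtomElt {M : Type*} [Monoid M] (a : M) : Prop :=
  a ≠ 1 ∧ ∀ b c : M, a = b * c → b = 1 ∨ c = 1

/-- `M` is atomic: every element is a finite product of atoms, and the lengths of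
expressions of a given element as products of atoms are bounded above. -/
def Atomic (M : Type*) [Monoid M] : Prop :=
  (∀ a : M, ∃ l : List M, (∀ x ∈ l, IsAtomElt x) ∧ l.prod = a) ∧
  (∀ a : M, ∃ N : ℕ, ∀ l : List M, (∀ x ∈ l, IsAtomElt x) → l.prod = a → l.length ≤ N)

/-- `Δ` is a Garside element: `L(Δ) = R(Δ)` and `L(Δ)` generates `M`. -/
def IsGarsideElt {M : Type*} [Monoid M] (Δ : M) : Prop :=
  Lset Δ = Rset Δ ∧ Submonoid.closure (Lset Δ) = ⊤

/-- `d` is a greatest common lower bound of `a` and `b` with respect to `≤_L`. -/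
def IsGlbL {M : Type*} [Monoid M] (a b d : M) : Prop :=
  dvdL d a ∧ dvdL d b ∧ ∀ c : M, dvdL c a → dvdL c b → dvdL c d

/-- `d` is a least common upper bound of `a` and `b` with respect to `≤_L`. -/
def IsLubL {M : Type*} [Monoid M] (a b d : M) : Prop :=
  dvdL a d ∧ dvdL b d ∧ ∀ c : M, dvdL a c → dvdL b c → dvdL d c

/-- `d` is a greatest common lower bound of `a` and `b` with respect to `≤_R`. -/
def IsGlbR {M : Type*} [Monoid M] (a b d : M) : Prop :=
  dvdR d a ∧ dvdR d b ∧ ∀ c : M, dvdR c a → dvdR c b → dvdR c d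

/-- `d` is a least common upper bound of `a` and `b` with respect to `≤_R`. -/
def IsLubR {M : Type*} [Monoid M] (a b d : M) : Prop :=
  dvdR a d ∧ dvdR b d ∧ ∀ c : M, dvdR a c → dvdR b c → dvdR d c

/-- `M` is a Garside monoid: finitely generated, left and right cancellative, atomic,
`≤_L`- and `≤_R`-lattice conditions, and it possesses a Garside element. -/
def IsGarsideMonoid (M : Type*) [Monoid M] : Prop :=
  (∃ S : Set M, S.Finite ∧ Submonoid.closure S = ⊤) ∧
  (∀ a b c : M, a * b = a * c → b = c) ∧
  (∀ a b c : M, b * a = c * a → b = c) ∧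
  Atomic M ∧
  (∀ a b : M, ∃ d, IsGlbL a b d) ∧
  (∀ a b : M, ∃ d, IsLubL a b d) ∧
  (∀ a b : M, ∃ d, IsGlbR a b d) ∧
  (∀ a b : M, ∃ d, IsLubR a b d) ∧
  (∃ Δ : M, IsGarsideElt Δ)

/-- Group-level left divisibility: `a ≤_L b` iff `a⁻¹ * b` is positive. -/
def gdvdL {G : Type*} [Group G] (P : Submonoid G) (a b : G) : Prop := a⁻¹ * b ∈ P

/-- Group-level right divisibility: `a ≤_R b` iff `b * a⁻¹` is positive. -/
def gdvdR {G : Type*} [Group G] (P : Submonoid G) (a b : G) : Prop := b * a⁻¹ ∈ P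

/-- `G` is a Garside group with positive monoid `P` and chosen Garside element `Δ`:
`P` is a Garside monoid, every element of `G` is a fraction `a * b⁻¹` of positive
elements, and `Δ` is a Garside element of `P`. -/
def IsGarsideGroup {G : Type*} [Group G] (P : Submonoid G) (Δ : G) : Prop :=
  IsGarsideMonoid P ∧
  (∀ g : G, ∃ a b : P, g = (a : G) * (b : G)⁻¹) ∧
  ∃ hΔ : Δ ∈ P, IsGarsideElt (⟨Δ, hΔ⟩ : P)

/-- A right action of the group `G` on the group `H` by group automorphisms,
written `h ↦ ρ.act x h` (the paper's `h^x`). -/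
structure RightAction (G H : Type*) [Group G] [Group H] where
  act : G → H → H
  act_mul : ∀ (x : G) (h₁ h₂ : H), act x (h₁ * h₂) = act x h₁ * act x h₂
  act_one : ∀ h : H, act 1 h = h
  act_comp : ∀ (x y : G) (h : H), act (x * y) h = act y (act x h)

namespace RightAction

variable {G H : Type*} [Group G] [Group H]

lemma act_one' (ρ : RightAction G H) (x : G) : ρ.act x 1 = 1 := by
  have h := ρ.act_mul x 1 1
  rw [one_mul] at h
  exact left_eq_mul.mp h

end RightAction

/-- The semidirect product `G ⋉ H` with multiplication
`(x₁,h₁)·(x₂,h₂) = (x₁·x₂, h₁^{x₂}·h₂)`. -/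
structure SDP {G H : Type*} [Group G] [Group H] (ρ : RightAction G H) where
  g : G
  h : H

namespace SDP

variable {G H : Type*} [Group G] [Group H] {ρ : RightAction G H}

protected def gmul (p q : SDP ρ) : SDP ρ := ⟨p.g * q.g, ρ.act q.g p.h * q.h⟩

protected def gone : SDP ρ := ⟨1, 1⟩

protected def ginv (p : SDP ρ) : SDP ρ := ⟨p.g⁻¹, ρ.act p.g⁻¹ p.h⁻¹⟩

protected lemma gmul_assoc (p q r : SDP ρ) :
    SDP.gmul (SDP.gmul p q) r = SDP.gmul p (SDP.gmul q r) := by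
  simp only [SDP.gmul, mk.injEq]
  exact ⟨mul_assoc _ _ _, by rw [ρ.act_mul, ρ.act_comp, mul_assoc]⟩

protected lemma gone_mul (p : SDP ρ) : SDP.gmul SDP.gone p = p := by
  simp only [SDP.gmul, SDP.gone]
  simp [RightAction.act_one']

protected lemma gmul_one (p : SDP ρ) : SDP.gmul p SDP.gone = p := by
  simp only [SDP.gmul, SDP.gone]
  simp [ρ.act_one]

protected lemma ginv_mul_cancel (p : SDP ρ) : SDP.gmul (SDP.ginv p) p = SDP.gone := by
  simp only [SDP.gmul, SDP.ginv, SDP.gone, mk.injEq]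
  rw [← ρ.act_comp]
  simp [ρ.act_one]

/-- The group structure on the semidirect product `G ⋉ H`. -/
instance : Group (SDP ρ) where
  mul := SDP.gmul
  one := SDP.gone
  inv := SDP.ginv
  mul_assoc := SDP.gmul_assoc
  one_mul := SDP.gone_mul
  mul_one := SDP.gmul_one
  inv_mul_cancel := SDP.ginv_mul_cancel

@[simp] lemma mul_g (p q : SDP ρ) : (p * q).g = p.g * q.g := rfl
@[simp] lemma mul_h (p q : SDP ρ) : (p * q).h = ρ.act q.g p.h * q.h := rfl
@[simp] lemma one_g : (1 : SDP ρ).g = 1 := rfl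
@[simp] lemma one_h : (1 : SDP ρ).h = 1 := rfl

end SDP

/-- Membership in the submonoid `G⁺ ⋉ H⁺` of `G ⋉ H`. -/
def SDPpos {G H : Type*} [Group G] [Group H] {ρ : RightAction G H}
    (PG : Submonoid G) (PH : Submonoid H) (p : SDP ρ) : Prop :=
  p.g ∈ PG ∧ p.h ∈ PH

/-- `p ≤_L q` in `G ⋉ H`: `p · u = q` for some `u ∈ G⁺ ⋉ H⁺`. -/
def SDPdvdL {G H : Type*} [Group G] [Group H] {ρ : RightAction G H}
    (PG : Submonoid G) (PH : Submonoid H) (p q : SDP ρ) : Prop :=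
  ∃ u : SDP ρ, SDPpos PG PH u ∧ p * u = q

/-- `p ≤_R q` in `G ⋉ H`: `u · p = q` for some `u ∈ G⁺ ⋉ H⁺`. -/
def SDPdvdR {G H : Type*} [Group G] [Group H] {ρ : RightAction G H}
    (PG : Submonoid G) (PH : Submonoid H) (p q : SDP ρ) : Prop :=
  ∃ u : SDP ρ, SDPpos PG PH u ∧ u * p = q

/-- **Proposition 4.2 (3),(4).** For `a₁, a₂ ∈ G⁺` and `b₁, b₂ ∈ H⁺`:
`(a₁,b₁) ≤_L (a₂,b₂)` iff `a₁ ≤_L a₂` and `b₁^{a₁⁻¹} ≤_L b₂^{a₂⁻¹}`, and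
`(a₁,b₁) ≤_R (a₂,b₂)` iff `a₁ ≤_R a₂` and `b₁ ≤_R b₂`. -/
theorem sdp_dvdL_dvdR_iff {G H : Type*} [Group G] [Group H] (ρ : RightAction G H)
    (PG : Submonoid G) (PH : Submonoid H) (ΔG : G) (ΔH : H)
    (hG : IsGarsideGroup PG ΔG) (hH : IsGarsideGroup PH ΔH)
    (hact : ∀ x : G, ρ.act x '' (PH : Set H) = (PH : Set H))
    (a₁ a₂ : G) (b₁ b₂ : H)
    (ha₁ : a₁ ∈ PG) (ha₂ : a₂ ∈ PG) (hb₁ : b₁ ∈ PH) (hb₂ : b₂ ∈ PH) :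
    (SDPdvdL PG PH (SDP.mk a₁ b₁ : SDP ρ) (SDP.mk a₂ b₂) ↔
      gdvdL PG a₁ a₂ ∧ gdvdL PH (ρ.act a₁⁻¹ b₁) (ρ.act a₂⁻¹ b₂)) ∧
    (SDPdvdR PG PH (SDP.mk a₁ b₁ : SDP ρ) (SDP.mk a₂ b₂) ↔
      gdvdR PG a₁ a₂ ∧ gdvdR PH b₁ b₂) := by
  have act_inv : ∀ (x : G) (h : H), ρ.act x h⁻¹ = (ρ.act x h)⁻¹ := by
    intro x h
    have := ρ.act_mul x h h⁻¹
    rw [mul_inv_cancel, ρ.act_one'] at this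
    exact (inv_eq_of_mul_eq_one_right this.symm).symm
  have act_act : ∀ (x y : G) (h : H), ρ.act y (ρ.act x h) = ρ.act (x * y) h := by
    intro x y h; rw [ρ.act_comp]
  have mem_iff : ∀ (x : G) (h : H), ρ.act x h ∈ PH ↔ h ∈ PH := by
    intro x h
    constructor
    · intro hm
      have : ρ.act x⁻¹ (ρ.act x h) ∈ ρ.act x⁻¹ '' (PH : Set H) := ⟨_, hm, rfl⟩
      rw [hact x⁻¹] at this
      rwa [act_act, mul_inv_cancel, ρ.act_one] at this
    · intro hm
      have : ρ.act x h ∈ ρ.act x '' (PH : Set H) := ⟨_, hm, rfl⟩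
      rwa [hact x] at this
  constructor
  · constructor
    · rintro ⟨u, ⟨hug, huh⟩, hmul⟩
      have hg : a₁ * u.g = a₂ := congrArg SDP.g hmul
      have hh : ρ.act u.g b₁ * u.h = b₂ := congrArg SDP.h hmul
      have hug' : u.g = a₁⁻¹ * a₂ := by rw [← hg]; group
      refine ⟨by rwa [gdvdL, ← hug'], ?_⟩
      have huh' : u.h = (ρ.act (a₁⁻¹ * a₂) b₁)⁻¹ * b₂ := by
        rw [← hug', ← hh]; group
      have key : ρ.act a₂⁻¹ u.h = (ρ.act a₁⁻¹ b₁)⁻¹ * ρ.act a₂⁻¹ b₂ := by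
        rw [huh', ρ.act_mul, act_inv, act_act, mul_assoc, mul_inv_cancel, mul_one]
      rw [gdvdL, ← key]
      exact (mem_iff _ _).mpr huh
    · rintro ⟨hg, hh⟩
      refine ⟨⟨a₁⁻¹ * a₂, ρ.act a₂ ((ρ.act a₁⁻¹ b₁)⁻¹ * ρ.act a₂⁻¹ b₂)⟩,
        ⟨hg, (mem_iff _ _).mpr hh⟩, ?_⟩
      have : (SDP.mk a₁ b₁ : SDP ρ) * ⟨a₁⁻¹ * a₂, ρ.act a₂ ((ρ.act a₁⁻¹ b₁)⁻¹ * ρ.act a₂⁻¹ b₂)⟩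
          = ⟨a₁ * (a₁⁻¹ * a₂), ρ.act (a₁⁻¹ * a₂) b₁ *
            ρ.act a₂ ((ρ.act a₁⁻¹ b₁)⁻¹ * ρ.act a₂⁻¹ b₂)⟩ := rfl
      rw [this]
      congr 1
      · group
      · rw [ρ.act_mul, act_inv, act_act, act_act, inv_mul_cancel, ρ.act_one, ← mul_assoc,
          mul_inv_cancel, one_mul]
  · constructor
    · rintro ⟨u, ⟨hug, huh⟩, hmul⟩
      have hg : u.g * a₁ = a₂ := congrArg SDP.g hmul
      have hh : ρ.act a₁ u.h * b₁ = b₂ := congrArg SDP.h hmul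
      have hug' : u.g = a₂ * a₁⁻¹ := by rw [← hg]; group
      refine ⟨by rwa [gdvdR, ← hug'], ?_⟩
      have huh' : ρ.act a₁ u.h = b₂ * b₁⁻¹ := by rw [← hh]; group
      rw [gdvdR, ← huh']
      exact (mem_iff _ _).mpr huh
    · rintro ⟨hg, hh⟩
      refine ⟨⟨a₂ * a₁⁻¹, ρ.act a₁⁻¹ (b₂ * b₁⁻¹)⟩, ⟨hg, (mem_iff _ _).mpr hh⟩, ?_⟩
      have : (⟨a₂ * a₁⁻¹, ρ.act a₁⁻¹ (b₂ * b₁⁻¹)⟩ : SDP ρ) * SDP.mk a₁ b₁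
          = ⟨a₂ * a₁⁻¹ * a₁, ρ.act a₁ (ρ.act a₁⁻¹ (b₂ * b₁⁻¹)) * b₁⟩ := rfl
      rw [this]
      congr 1
      · group
      · rw [act_act, inv_mul_cancel, ρ.act_one]; group
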